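/- The set of confusion matrices 𝒞 = {(TP(h), TN(h)) : h a classifier} is a compact subset of ℝ². -/

import Mathlib

open MeasureTheory Set

open scoped RealInnerProductSpace

section Aux

variable {X : Type*} [MeasurableSpace X] {μ : Measure X} [IsProbabilityMeasure μ]

private lemma mem2 {f : X → ℝ} (hf : Measurable f) (h01 : ∀ x, f x ∈ Icc (0:ℝ) 1) :
    MemLp f 2 μ :=
  MemLp.of_bound hf.aestronglyMeasurable 1 (Filter.Eventually.of_forall fun x => by
    rw [Real.norm_eq_abs, abs_le]
    exact ⟨by linarith [(h01 x).1], (h01 x).2⟩)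

private lemma lp_integrable (f : Lp ℝ 2 μ) : Integrable (⇑f) μ :=
  (Lp.memLp f).integrable one_le_two

end Aux

set_option maxHeartbeats 2000000 in
/-- The set of confusion matrices `𝒞` is a compact subset of `ℝ²`. -/
theorem confusion_set_compact
    {X : Type*} [MeasurableSpace X] (μ : Measure X) [IsProbabilityMeasure μ]
    (η : X → ℝ) (hη : Measurable η) (hη01 : ∀ x, η x ∈ Icc (0:ℝ) 1) :
    IsCompact {p : ℝ × ℝ | ∃ h : X → ℝ, Measurable h ∧ (∀ x, h x ∈ Icc (0:ℝ) 1) ∧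
        p = (∫ x, η x * h x ∂μ, ∫ x, (1 - η x) * (1 - h x) ∂μ)} := by
  classical
  -- η, ξ := 1 - η and the constant 1 as elements of L²(μ)
  set ξ : X → ℝ := fun x => 1 - η x with hξdef
  have hξm : Measurable ξ := measurable_const.sub hη
  have hξ01 : ∀ x, ξ x ∈ Icc (0:ℝ) 1 := fun x =>
    ⟨by simp only [hξdef]; linarith [(hη01 x).2], by simp only [hξdef]; linarith [(hη01 x).1]⟩
  set ηL : Lp ℝ 2 μ := (mem2 hη hη01).toLp η with hηLdef
  set ξL : Lp ℝ 2 μ := (mem2 hξm hξ01).toLp ξ with hξLdef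
  have h1m : MemLp (fun _ : X => (1:ℝ)) 2 μ := mem2 measurable_const fun x => ⟨zero_le_one, le_rfl⟩
  set oneL : Lp ℝ 2 μ := h1m.toLp _ with honeLdef
  have honeL : ⇑oneL =ᵐ[μ] fun _ => (1:ℝ) := h1m.coeFn_toLp
  have hηLc : ⇑ηL =ᵐ[μ] η := (mem2 hη hη01).coeFn_toLp
  have hξLc : ⇑ξL =ᵐ[μ] ξ := (mem2 hξm hξ01).coeFn_toLp
  set c : ℝ := ∫ x, ξ x ∂μ with hcdef
  -- real inner product on L² is the integral of the product
  have inner_eq : ∀ f g : Lp ℝ 2 μ, ⟪f, g⟫ = ∫ x, f x * g x ∂μ := by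
    intro f g
    rw [L2.inner_def]
    congr 1
    ext x; simp [mul_comm]
  have inner_int : ∀ f g : Lp ℝ 2 μ, Integrable (fun x => f x * g x) μ := by
    intro f g
    have := L2.integrable_inner (𝕜 := ℝ) f g
    simpa [mul_comm] using this
  -- ‖oneL‖ = 1
  have honenorm : ‖oneL‖ = 1 := by
    have h2 : ⟪oneL, oneL⟫ = 1 := by
      rw [inner_eq]
      rw [integral_congr_ae (by filter_upwards [honeL] with x hx; rw [hx]; ring :
        (fun x => oneL x * oneL x) =ᵐ[μ] fun _ => (1:ℝ))]
      simp
    have h3 : ‖oneL‖ ^ 2 = 1 := by rw [← real_inner_self_eq_norm_sq]; exact h2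
    nlinarith [norm_nonneg oneL]
  -- the compact set S in the weak-* dual of L²
  set S : Set (WeakDual ℝ (Lp ℝ 2 μ)) :=
    {φ | ∀ f : Lp ℝ 2 μ, 0 ≤ᵐ[μ] ⇑f → φ f ∈ Icc 0 (∫ x, f x ∂μ)} with hSdef
  have hScl : IsClosed S := by
    have : S = ⋂ f ∈ {f : Lp ℝ 2 μ | 0 ≤ᵐ[μ] ⇑f},
        (fun φ : WeakDual ℝ (Lp ℝ 2 μ) => φ f) ⁻¹' Icc 0 (∫ x, f x ∂μ) := by
      ext φ; simp [hSdef]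
    rw [this]
    exact isClosed_biInter fun f _ => isClosed_Icc.preimage (WeakDual.eval_continuous f)
  -- integral bound: for nonneg part functions, ∫ ≤ ‖f‖
  have int_le_norm : ∀ f g : Lp ℝ 2 μ, (0 ≤ᵐ[μ] ⇑g) → (∀ᵐ x ∂μ, g x ≤ |f x|) →
      ∫ x, g x ∂μ ≤ ‖f‖ := by
    intro f g hg0 hgle
    have habs : ⇑|f| =ᵐ[μ] fun x => |f x| := Lp.coeFn_abs f
    have h1 : ∫ x, g x ∂μ ≤ ∫ x, |f| x ∂μ := by
      refine integral_mono_ae (lp_integrable g) (lp_integrable |f|) ?_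
      filter_upwards [hgle, habs] with x h1 h2
      rw [h2]; exact h1
    have h2 : ∫ x, |f| x ∂μ = ⟪|f|, oneL⟫ := by
      rw [inner_eq]
      refine integral_congr_ae ?_
      filter_upwards [honeL] with x hx
      rw [hx, mul_one]
    have h3 : ⟪|f|, oneL⟫ ≤ ‖|f|‖ * ‖oneL‖ := real_inner_le_norm _ _
    rw [honenorm, mul_one, norm_abs_eq_norm] at h3
    linarith
  -- S is bounded in the dual norm
  have hSball : S ⊆ WeakDual.toStrongDual ⁻¹' Metric.closedBall 0 1 := by
    intro φ hφ
    simp only [mem_preimage, Metric.mem_closedBall, dist_zero_right]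
    refine ContinuousLinearMap.opNorm_le_bound _ zero_le_one fun f => ?_
    rw [one_mul]
    have hposc := Lp.coeFn_posPart f
    have hnegc := Lp.coeFn_negPart f
    have hsplit : f = Lp.posPart f - Lp.negPart f := by
      refine (Lp.ext ?_).symm
      filter_upwards [Lp.coeFn_sub (Lp.posPart f) (Lp.negPart f), hposc, hnegc]
        with x h1 h2 h3
      rw [h1]; simp only [Pi.sub_apply]; rw [h2, h3]
      rcases le_total (f x) 0 with h | h
      · rw [max_eq_right h, min_eq_left h]; ring
      · rw [max_eq_left h, min_eq_right h]; ring
    have hp := hφ (Lp.posPart f) (by filter_upwards [hposc] with x hx; rw [hx]; exact le_max_right _ _)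
    have hn := hφ (Lp.negPart f) (by filter_upwards [hnegc] with x hx; rw [hx]; simp [le_max_right])
    have hpb : ∫ x, Lp.posPart f x ∂μ ≤ ‖f‖ := by
      refine int_le_norm f _ (by filter_upwards [hposc] with x hx; rw [hx]; exact le_max_right _ _) ?_
      filter_upwards [hposc] with x hx
      rw [hx]; exact max_le (le_abs_self _) (abs_nonneg _)
    have hnb : ∫ x, Lp.negPart f x ∂μ ≤ ‖f‖ := by
      refine int_le_norm f _ (by filter_upwards [hnegc] with x hx; rw [hx]; simp [le_max_right]) ?_
      filter_upwards [hnegc] with x hx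
      rw [hx]
      rcases le_total (f x) 0 with h | h
      · rw [min_eq_left h]; rw [abs_of_nonpos h]
      · rw [min_eq_right h]; simp [abs_nonneg]
    have heval : φ f = φ (Lp.posPart f) - φ (Lp.negPart f) := by
      conv_lhs => rw [hsplit]
      exact map_sub φ _ _
    show ‖φ f‖ ≤ ‖f‖
    rw [heval, Real.norm_eq_abs, abs_le]
    constructor
    · have := hp.1; have := hn.2; linarith
    · have := hp.2; have := hn.1; linarith
  have hScompact : IsCompact S :=
    (WeakDual.isCompact_closedBall (0 : StrongDual ℝ (Lp ℝ 2 μ)) 1).of_isClosed_subset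
      hScl hSball
  -- the continuous evaluation map
  set Φ : WeakDual ℝ (Lp ℝ 2 μ) → ℝ × ℝ := fun φ => (φ ηL, c - φ ξL) with hΦdef
  have hΦc : Continuous Φ :=
    (WeakDual.eval_continuous ηL).prodMk (continuous_const.sub (WeakDual.eval_continuous ξL))
  -- the confusion set is the image of S under Φ
  have hset : {p : ℝ × ℝ | ∃ h : X → ℝ, Measurable h ∧ (∀ x, h x ∈ Icc (0:ℝ) 1) ∧
      p = (∫ x, η x * h x ∂μ, ∫ x, (1 - η x) * (1 - h x) ∂μ)} = Φ '' S := by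
    ext p
    constructor
    · rintro ⟨h, hhm, hh01, rfl⟩
      set hL : Lp ℝ 2 μ := (mem2 hhm hh01).toLp h with hhLdef
      have hhLc : ⇑hL =ᵐ[μ] h := (mem2 hhm hh01).coeFn_toLp
      refine ⟨(InnerProductSpace.toDual ℝ (Lp ℝ 2 μ) hL).toWeakDual, ?_, ?_⟩
      · intro f hf
        have hev : (InnerProductSpace.toDual ℝ (Lp ℝ 2 μ) hL).toWeakDual f
            = ∫ x, h x * f x ∂μ := by
          have : (InnerProductSpace.toDual ℝ (Lp ℝ 2 μ) hL).toWeakDual f = ⟪hL, f⟫ :=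
            InnerProductSpace.toDual_apply_apply
          rw [this, inner_eq]
          refine integral_congr_ae ?_
          filter_upwards [hhLc] with x hx; rw [hx]
        rw [hev]
        have hint : Integrable (fun x => h x * f x) μ :=
          (lp_integrable f).bdd_mul (c := 1) hhm.aestronglyMeasurable (Filter.Eventually.of_forall fun x => by
            rw [Real.norm_eq_abs, abs_of_nonneg (hh01 x).1]; exact (hh01 x).2)
        constructor
        · refine integral_nonneg_of_ae ?_
          filter_upwards [hf] with x hx
          exact mul_nonneg (hh01 x).1 hx
        · refine integral_mono_ae hint (lp_integrable f) ?_
          filter_upwards [hf] with x hx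
          calc h x * f x ≤ 1 * f x := mul_le_mul_of_nonneg_right (hh01 x).2 hx
          _ = f x := one_mul _
      · simp only [hΦdef]
        have hev : ∀ f : Lp ℝ 2 μ, (InnerProductSpace.toDual ℝ (Lp ℝ 2 μ) hL).toWeakDual f
            = ∫ x, h x * f x ∂μ := by
          intro f
          have : (InnerProductSpace.toDual ℝ (Lp ℝ 2 μ) hL).toWeakDual f = ⟪hL, f⟫ :=
            InnerProductSpace.toDual_apply_apply
          rw [this, inner_eq]
          refine integral_congr_ae ?_
          filter_upwards [hhLc] with x hx; rw [hx]
        rw [hev ηL, hev ξL]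
        have hintη : Integrable (fun x => h x * ηL x) μ :=
          (lp_integrable ηL).bdd_mul (c := 1) hhm.aestronglyMeasurable (Filter.Eventually.of_forall fun x => by
            rw [Real.norm_eq_abs, abs_of_nonneg (hh01 x).1]; exact (hh01 x).2)
        have hintξ : Integrable (fun x => h x * ξ x) μ := by
          refine (Integrable.bdd_mul (c := 1) ?_ hhm.aestronglyMeasurable ?_)
          · exact ((mem2 hξm hξ01).integrable one_le_two)
          · exact Filter.Eventually.of_forall fun x => by
              rw [Real.norm_eq_abs, abs_of_nonneg (hh01 x).1]; exact (hh01 x).2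
        have e1 : ∫ x, h x * ηL x ∂μ = ∫ x, η x * h x ∂μ := by
          refine integral_congr_ae ?_
          filter_upwards [hηLc] with x hx; rw [hx]; ring
        have e2 : ∫ x, h x * ξL x ∂μ = ∫ x, h x * ξ x ∂μ := by
          refine integral_congr_ae ?_
          filter_upwards [hξLc] with x hx; rw [hx]
        have e3 : c - ∫ x, h x * ξ x ∂μ = ∫ x, (1 - η x) * (1 - h x) ∂μ := by
          rw [hcdef, ← integral_sub ((mem2 hξm hξ01).integrable one_le_two) hintξ]
          refine integral_congr_ae (Filter.Eventually.of_forall fun x => ?_)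
          simp only [hξdef]; ring
        rw [e1, e2, e3]
    · rintro ⟨φ, hφS, rfl⟩
      -- Riesz representation
      set g : Lp ℝ 2 μ := (InnerProductSpace.toDual ℝ (Lp ℝ 2 μ)).symm
        (WeakDual.toStrongDual φ) with hgdef
      have hrepr : ∀ f : Lp ℝ 2 μ, φ f = ⟪g, f⟫ := fun f =>
        (InnerProductSpace.toDual_symm_apply (𝕜 := ℝ)).symm
      -- g is a.e. nonneg
      have hg0 : ∀ᵐ x ∂μ, 0 ≤ g x := by
        have hnegc := Lp.coeFn_negPart g
        have hmem := hφS (Lp.negPart g)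
          (by filter_upwards [hnegc] with x hx; rw [hx]; simp [le_max_right])
        have h1 : φ (Lp.negPart g) = ∫ x, g x * Lp.negPart g x ∂μ := by
          rw [hrepr, inner_eq]
        have h2 : ∫ x, g x * Lp.negPart g x ∂μ = - ∫ x, (Lp.negPart g x) ^ 2 ∂μ := by
          rw [← integral_neg]
          refine integral_congr_ae ?_
          filter_upwards [hnegc] with x hx
          rw [hx]
          rcases le_total (g x) 0 with h | h
          · rw [min_eq_left h]; ring
          · rw [min_eq_right h]; ring
        have hsqint : Integrable (fun x => (Lp.negPart g x) ^ 2) μ := by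
          have := inner_int (Lp.negPart g) (Lp.negPart g)
          refine this.congr (Filter.Eventually.of_forall fun x => by ring)
        have hz : ∫ x, (Lp.negPart g x) ^ 2 ∂μ = 0 := by
          have hge : 0 ≤ ∫ x, (Lp.negPart g x) ^ 2 ∂μ :=
            integral_nonneg fun x => sq_nonneg _
          have hle : ∫ x, (Lp.negPart g x) ^ 2 ∂μ ≤ 0 := by
            have := hmem.1; rw [h1, h2] at this; linarith
          linarith
        have hnp0 : (fun x => (Lp.negPart g x) ^ 2) =ᵐ[μ] 0 :=
          (integral_eq_zero_iff_of_nonneg (fun x => sq_nonneg _) hsqint).mp hz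
        filter_upwards [hnp0, hnegc] with x h1 h2
        simp only [Pi.zero_apply] at h1
        have : Lp.negPart g x = 0 := by nlinarith [sq_nonneg (Lp.negPart g x)]
        rw [h2] at this
        by_contra hc
        push_neg at hc
        rw [min_eq_left hc.le] at this
        linarith
      -- g is a.e. ≤ 1
      have hg1 : ∀ᵐ x ∂μ, g x ≤ 1 := by
        set q : Lp ℝ 2 μ := Lp.posPart (g - oneL) with hqdef
        have hqc : ⇑q =ᵐ[μ] fun x => max (g x - 1) 0 := by
          filter_upwards [Lp.coeFn_posPart (g - oneL), Lp.coeFn_sub g oneL, honeL]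
            with x h1 h2 h3
          rw [h1, h2]; simp only [Pi.sub_apply]; rw [h3]
        have hmem := hφS q (by filter_upwards [hqc] with x hx; rw [hx]; exact le_max_right _ _)
        have h1 : φ q = ∫ x, g x * q x ∂μ := by rw [hrepr, inner_eq]
        have h2 : ∫ x, g x * q x ∂μ - ∫ x, q x ∂μ = ∫ x, (q x) ^ 2 ∂μ := by
          rw [← integral_sub (inner_int g q) (lp_integrable q)]
          refine integral_congr_ae ?_
          filter_upwards [hqc] with x hx
          rw [hx]
          rcases le_total (g x - 1) 0 with h | h
          · rw [max_eq_right h]; ring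
          · rw [max_eq_left h]; ring
        have hsqint : Integrable (fun x => (q x) ^ 2) μ :=
          (inner_int q q).congr (Filter.Eventually.of_forall fun x => by ring)
        have hz : ∫ x, (q x) ^ 2 ∂μ = 0 := by
          have hge : 0 ≤ ∫ x, (q x) ^ 2 ∂μ := integral_nonneg fun x => sq_nonneg _
          have hle : ∫ x, (q x) ^ 2 ∂μ ≤ 0 := by
            have := hmem.2; rw [h1] at this; linarith [h2]
          linarith
        have hq0 : (fun x => (q x) ^ 2) =ᵐ[μ] 0 :=
          (integral_eq_zero_iff_of_nonneg (fun x => sq_nonneg _) hsqint).mp hz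
        filter_upwards [hq0, hqc] with x h1 h2
        simp only [Pi.zero_apply] at h1
        have hq0x : q x = 0 := by nlinarith [sq_nonneg (q x)]
        rw [h2] at hq0x
        by_contra hc
        push_neg at hc
        rw [max_eq_left (by linarith)] at hq0x
        linarith
      -- build the classifier
      have hgm := Lp.aestronglyMeasurable g
      set h : X → ℝ := fun x => max 0 (min 1 (hgm.mk (⇑g) x)) with hhdef
      have hhm : Measurable h :=
        (measurable_const.max ((measurable_const.min hgm.stronglyMeasurable_mk.measurable)))
      have hh01 : ∀ x, h x ∈ Icc (0:ℝ) 1 := fun x =>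
        ⟨le_max_left _ _, max_le (by norm_num) (min_le_left _ _)⟩
      have hhg : (fun x => h x) =ᵐ[μ] ⇑g := by
        filter_upwards [hgm.ae_eq_mk, hg0, hg1] with x h1 h2 h3
        simp only [hhdef]
        rw [← h1, min_eq_right h3, max_eq_right h2]
      refine ⟨h, hhm, hh01, ?_⟩
      simp only [hΦdef]
      have e1 : φ ηL = ∫ x, η x * h x ∂μ := by
        rw [hrepr, inner_eq]
        refine integral_congr_ae ?_
        filter_upwards [hhg, hηLc] with x h1 h2
        rw [h2, ← h1]; ring
      have e2 : φ ξL = ∫ x, ξ x * h x ∂μ := by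
        rw [hrepr, inner_eq]
        refine integral_congr_ae ?_
        filter_upwards [hhg, hξLc] with x h1 h2
        rw [h2, ← h1]; ring
      have hinthξ : Integrable (fun x => ξ x * h x) μ := by
        refine Integrable.bdd_mul (c := 1) ?_ hξm.aestronglyMeasurable ?_
        · exact (mem2 hhm hh01).integrable one_le_two
        · exact Filter.Eventually.of_forall fun x => by
            rw [Real.norm_eq_abs, abs_of_nonneg (hξ01 x).1]; exact (hξ01 x).2
      have e3 : c - ∫ x, ξ x * h x ∂μ = ∫ x, (1 - η x) * (1 - h x) ∂μ := by
        rw [hcdef, ← integral_sub ((mem2 hξm hξ01).integrable one_le_two) hinthξ]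
        refine integral_congr_ae (Filter.Eventually.of_forall fun x => ?_)
        simp only [hξdef]; ring
      rw [e1, e2, e3]
  rw [hset]
  exact hScompact.image hΦc
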